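/- For every real number c < 0, one has d_TV(η^s_{c − ln √s}, ν_s) → e^{-c}/(1 + e^{-c}) as the integer s tends to infinity. -/

import Mathlib

open MeasureTheory Polynomial Filter

/-- The orthogonal polynomials `Q_n^s`: `Q_0 = 1`, `Q_1 = X`,
`X * Q_n = Q_{n+1} + √s * Q_n + Q_{n-1}`. -/
noncomputable def Qpoly (s : ℕ) : ℕ → Polynomial ℝ
  | 0 => 1
  | 1 => Polynomial.X
  | (n + 2) => Polynomial.X * Qpoly s (n + 1)
      - Polynomial.C (Real.sqrt s) * Qpoly s (n + 1) - Qpoly s n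

/-- Chebyshev polynomials of the second kind: `P_0 = 1`, `P_1 = X`,
`X * P_n = P_{n+1} + P_{n-1}`. -/
noncomputable def Ppoly : ℕ → Polynomial ℝ
  | 0 => 1
  | 1 => Polynomial.X
  | (n + 2) => Polynomial.X * Ppoly (n + 1) - Ppoly n

/-- The density of the absolutely continuous part of `ν_s`. -/
noncomputable def nuDensity (s : ℕ) (x : ℝ) : ℝ :=
  Real.sqrt (4 - (x - Real.sqrt s) ^ 2) / (2 * Real.pi * (x * Real.sqrt s + 1))

/-- The free Meixner measure `ν_s`. -/
noncomputable def nuMeas (s : ℕ) : Measure ℝ :=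
  volume.withDensity (fun x => ENNReal.ofReal
      (if |x - Real.sqrt s| ≤ 2 then nuDensity s x else 0))
    + ENNReal.ofReal (1 - 1 / (s : ℝ)) • Measure.dirac (-1 / Real.sqrt s)

/-- The density `f_c`. -/
noncomputable def fc (s : ℕ) (c x : ℝ) : ℝ :=
  (Real.exp c + Real.sqrt s) / (Real.exp c + Real.exp (-c) + Real.sqrt s - x)

/-- The measure `η_c^s = f_c · ν_s + 1_{c<0} ((e^{-c}-e^c)/(e^{-c}+√s)) δ_{e^c+√s+e^{-c}}`. -/
noncomputable def etaMeas (s : ℕ) (c : ℝ) : Measure ℝ :=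
  (nuMeas s).withDensity (fun x => ENNReal.ofReal (fc s c x))
    + (if c < 0 then
        ENNReal.ofReal ((Real.exp (-c) - Real.exp c) / (Real.exp (-c) + Real.sqrt s))
      else 0) • Measure.dirac (Real.exp c + Real.sqrt s + Real.exp (-c))

/-- Total variation distance between two Borel measures on `ℝ`. -/
noncomputable def dTV (μ ν : Measure ℝ) : ℝ :=
  ⨆ A : {A : Set ℝ // MeasurableSet A}, |(μ A.1).toReal - (ν A.1).toReal|

noncomputable def Mex (c a : ℝ) : ℝ :=
  (Real.exp (-c) * a - Real.exp c / a) / (Real.exp (-c) * a + a)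

noncomputable def Uex (c a : ℝ) : ℝ :=
  (Real.exp (-c) * a + 1 / a) / (Real.exp c / a + a + Real.exp (-c) * a + 1 / a)

noncomputable def Wex (a : ℝ) : ℝ := 4 * (Real.pi * (a - 1) ^ 2)⁻¹

instance : Nonempty {A : Set ℝ // MeasurableSet A} := ⟨⟨∅, MeasurableSet.empty⟩⟩

lemma sqrt_tendsto_atTop : Tendsto (fun s : ℕ => Real.sqrt s) atTop atTop := by
  rw [tendsto_atTop_atTop]
  intro b
  refine ⟨⌈(max b 0) ^ 2⌉₊, fun n hn => ?_⟩
  have h1 : (max b 0) ^ 2 ≤ (n : ℝ) := by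
    calc (max b 0) ^ 2 ≤ (⌈(max b 0) ^ 2⌉₊ : ℝ) := Nat.le_ceil _
    _ ≤ n := Nat.cast_le.2 hn
  calc b ≤ max b 0 := le_max_left _ _
  _ = Real.sqrt ((max b 0) ^ 2) := (Real.sqrt_sq (le_max_right _ _)).symm
  _ ≤ Real.sqrt n := Real.sqrt_le_sqrt h1

set_option maxHeartbeats 2000000 in
lemma dTV_bounds (c : ℝ) (hc : c < 0) (s : ℕ) (ha2 : 2 ≤ Real.sqrt s)
    (hae : Real.sqrt s + 2 ≤ Real.exp (-c) * Real.sqrt s) :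
    Mex c (Real.sqrt s) ≤ dTV (etaMeas s (c - Real.log (Real.sqrt s))) (nuMeas s) ∧
    dTV (etaMeas s (c - Real.log (Real.sqrt s))) (nuMeas s)
      ≤ max (Mex c (Real.sqrt s)) (Uex c (Real.sqrt s) + Wex (Real.sqrt s)) := by
  set a := Real.sqrt s with ha_def
  have ha0 : (0 : ℝ) < a := by linarith
  set c' := c - Real.log a with hc'_def
  have hexp : Real.exp c' = Real.exp c / a := by
    rw [hc'_def, Real.exp_sub, Real.exp_log ha0]
  have hexpn : Real.exp (-c') = Real.exp (-c) * a := by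
    rw [hc'_def, neg_sub, Real.exp_sub, Real.exp_log ha0, Real.exp_neg, div_eq_mul_inv,
      mul_comm]
  have hc'neg : c' < 0 := by
    have := Real.log_nonneg (by linarith : (1 : ℝ) ≤ a)
    rw [hc'_def]; linarith
  have hecp := Real.exp_pos c'
  have henp := Real.exp_pos (-c')
  have hEge : a + 2 ≤ Real.exp (-c') := by rw [hexpn]; exact hae
  -- bounds on fc
  have hden : ∀ x : ℝ, x ≤ a + 2 → 0 < Real.exp c' + Real.exp (-c') + a - x := by
    intro x hx; linarith
  have hfc_nonneg : ∀ x : ℝ, x ≤ a + 2 → 0 ≤ fc s c' x := by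
    intro x hx
    rw [fc, ← ha_def]
    exact div_nonneg (by positivity) (hden x hx).le
  have hfc_le_one : ∀ x : ℝ, x ≤ a + 2 → fc s c' x ≤ 1 := by
    intro x hx
    rw [fc, ← ha_def, div_le_one (hden x hx)]
    linarith
  set g : ℝ → ENNReal :=
    fun x => ENNReal.ofReal (if |x - a| ≤ 2 then nuDensity s x else 0) with hg
  have hν_eq : nuMeas s = volume.withDensity g
      + ENNReal.ofReal (1 - 1 / (s : ℝ)) • Measure.dirac (-1 / a) := rfl
  set k := ENNReal.ofReal (1 - 1 / (s : ℝ)) with hk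
  set p : ℝ := -1 / a with hp
  have hk1 : k ≤ 1 := by
    rw [hk, ENNReal.ofReal_le_one]
    have : (0:ℝ) ≤ 1 / (s : ℝ) := by positivity
    linarith
  have hp_neg : p < 0 := by rw [hp]; exact div_neg_of_neg_of_pos (by norm_num) ha0
  -- mass bound for the absolutely continuous part
  have hμ1 : volume.withDensity g Set.univ ≤ ENNReal.ofReal (Wex a) := by
    have hgle : ∀ x, g x ≤ Set.indicator (Set.Icc (a - 2) (a + 2))
        (fun _ => ENNReal.ofReal ((Real.pi * (a - 1) ^ 2)⁻¹)) x := by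
      intro x
      by_cases hx : |x - a| ≤ 2
      · obtain ⟨hxl, hxr⟩ := abs_le.1 hx
        rw [Set.indicator_of_mem (show x ∈ Set.Icc (a - 2) (a + 2) from
          ⟨by linarith, by linarith⟩), hg]
        simp only [if_pos hx]
        apply ENNReal.ofReal_le_ofReal
        rw [nuDensity, ← ha_def]
        have h1 : Real.sqrt (4 - (x - a) ^ 2) ≤ 2 := by
          calc Real.sqrt (4 - (x - a) ^ 2) ≤ Real.sqrt 4 :=
            Real.sqrt_le_sqrt (by nlinarith [sq_nonneg (x - a)])
          _ = 2 := by
            rw [show (4 : ℝ) = 2 ^ 2 by norm_num, Real.sqrt_sq (by norm_num : (0:ℝ) ≤ 2)]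
        have h4 : (0:ℝ) < (a - 1) ^ 2 := by nlinarith
        have h2 : (a - 1) ^ 2 ≤ x * a + 1 := by nlinarith
        have h3 : (0:ℝ) < x * a + 1 := by linarith
        calc Real.sqrt (4 - (x - a) ^ 2) / (2 * Real.pi * (x * a + 1))
            ≤ 2 / (2 * Real.pi * ((a - 1) ^ 2)) := by gcongr
        _ = (Real.pi * (a - 1) ^ 2)⁻¹ := by
          rw [inv_eq_one_div, div_eq_div_iff (by positivity) (by positivity)]
          ring
      · rw [hg]; simp only [if_neg hx]
        simp
    calc volume.withDensity g Set.univ = ∫⁻ x, g x := by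
          rw [withDensity_apply _ MeasurableSet.univ, Measure.restrict_univ]
    _ ≤ ∫⁻ x, Set.indicator (Set.Icc (a - 2) (a + 2))
          (fun _ => ENNReal.ofReal ((Real.pi * (a - 1) ^ 2)⁻¹)) x := lintegral_mono hgle
    _ = ∫⁻ _ in Set.Icc (a - 2) (a + 2), ENNReal.ofReal ((Real.pi * (a - 1) ^ 2)⁻¹) :=
          lintegral_indicator measurableSet_Icc _
    _ = ENNReal.ofReal ((Real.pi * (a - 1) ^ 2)⁻¹) * volume (Set.Icc (a - 2) (a + 2)) :=
          setLIntegral_const _ _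
    _ = ENNReal.ofReal ((Real.pi * (a - 1) ^ 2)⁻¹) * ENNReal.ofReal 4 := by
          rw [Real.volume_Icc]; norm_num
    _ = ENNReal.ofReal (Wex a) := by
          rw [← ENNReal.ofReal_mul (by positivity), Wex]
          congr 1; ring
  have hνuniv : nuMeas s Set.univ ≤ ENNReal.ofReal (Wex a) + 1 := by
    rw [hν_eq, Measure.add_apply, Measure.smul_apply, smul_eq_mul]
    refine add_le_add hμ1 ?_
    calc k * Measure.dirac p Set.univ ≤ 1 * 1 := mul_le_mul' hk1 prob_le_one
    _ = 1 := mul_one 1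
  have hνfin : nuMeas s Set.univ < ⊤ :=
    lt_of_le_of_lt hνuniv (by simp [ENNReal.add_lt_top])
  have hfm : Measurable fun x => ENNReal.ofReal (fc s c' x) := by
    apply Measurable.ennreal_ofReal
    unfold fc
    exact measurable_const.div (measurable_const.sub measurable_id)
  have hae_nu : ∀ᵐ x ∂(nuMeas s), x ≤ a + 2 := by
    rw [ae_iff]
    have hset : {x : ℝ | ¬ x ≤ a + 2} = Set.Ioi (a + 2) := by
      ext x; simp [Set.mem_Ioi, not_le]
    rw [hset, hν_eq, Measure.add_apply, Measure.smul_apply, smul_eq_mul]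
    have h1 : volume.withDensity g (Set.Ioi (a + 2)) = 0 := by
      rw [withDensity_apply _ measurableSet_Ioi]
      have hz : ∀ᵐ x ∂(volume.restrict (Set.Ioi (a + 2))), g x = 0 := by
        refine (ae_restrict_iff' measurableSet_Ioi).2 (ae_of_all _ fun x hx => ?_)
        rw [Set.mem_Ioi] at hx
        have hnx : ¬ |x - a| ≤ 2 := by rw [abs_le]; push_neg; intro h; linarith
        rw [hg]; simp [hnx]
      rw [lintegral_congr_ae hz, lintegral_zero]
    have h2 : Measure.dirac p (Set.Ioi (a + 2)) = 0 := by
      rw [Measure.dirac_apply' _ measurableSet_Ioi]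
      apply Set.indicator_of_notMem
      rw [Set.mem_Ioi]; push_neg; linarith
    rw [h1, h2, mul_zero, add_zero]
  have hmE_eq : (Real.exp (-c') - Real.exp c') / (Real.exp (-c') + a) = Mex c a := by
    rw [hexp, hexpn, Mex]
  have hη_eq : etaMeas s c' = (nuMeas s).withDensity (fun x => ENNReal.ofReal (fc s c' x))
      + ENNReal.ofReal (Mex c a)
        • Measure.dirac (Real.exp c' + a + Real.exp (-c')) := by
    rw [etaMeas, if_pos hc'neg, ← ha_def, hmE_eq]
  set y : ℝ := Real.exp c' + a + Real.exp (-c') with hy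
  have hy_pos : 0 < y := by rw [hy]; positivity
  have hM0 : 0 ≤ Mex c a := by
    rw [← hmE_eq]
    apply div_nonneg _ (by positivity)
    have h1 : Real.exp c' ≤ 1 := (Real.exp_le_one_iff).2 hc'neg.le
    linarith
  have hU0 : 0 ≤ Uex c a := by
    rw [Uex]
    have h1 : (0:ℝ) < 1 / a := by positivity
    have h2 : (0:ℝ) < Real.exp c / a := by positivity
    apply div_nonneg <;> nlinarith [Real.exp_pos (-c), Real.exp_pos c]
  have hW0 : 0 ≤ Wex a := by
    rw [Wex]
    have h4 : (0:ℝ) < (a - 1) ^ 2 := by nlinarith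
    positivity
  have heta_le : ∀ A : Set ℝ, MeasurableSet A →
      etaMeas s c' A ≤ nuMeas s A + ENNReal.ofReal (Mex c a) := by
    intro A hA
    rw [hη_eq, Measure.add_apply, Measure.smul_apply, smul_eq_mul,
      withDensity_apply _ hA]
    have h1 : ∫⁻ x in A, ENNReal.ofReal (fc s c' x) ∂(nuMeas s)
        ≤ ∫⁻ _ in A, 1 ∂(nuMeas s) := by
      apply lintegral_mono_ae
      filter_upwards [ae_restrict_of_ae hae_nu] with x hx
      exact ENNReal.ofReal_le_one.2 (hfc_le_one x hx)
    rw [setLIntegral_one] at h1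
    have h2 : ENNReal.ofReal (Mex c a) * Measure.dirac y A ≤ ENNReal.ofReal (Mex c a) := by
      calc ENNReal.ofReal (Mex c a) * Measure.dirac y A
          ≤ ENNReal.ofReal (Mex c a) * 1 := mul_le_mul_right prob_le_one _
      _ = _ := mul_one _
    exact add_le_add h1 h2
  have hfcp : 1 - fc s c' p = Uex c a := by
    rw [fc, ← ha_def, hexp, hexpn, hp, Uex]
    have h1 : Real.exp c / a + Real.exp (-c) * a + a - -1 / a
        = Real.exp c / a + a + Real.exp (-c) * a + 1 / a := by ring
    rw [h1]
    have h2 : (0:ℝ) < Real.exp c / a + a + Real.exp (-c) * a + 1 / a := by positivity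
    field_simp
    ring
  have hp_le : p ≤ a + 2 := by linarith
  have hnu_le : ∀ A : Set ℝ, MeasurableSet A →
      nuMeas s A ≤ etaMeas s c' A + (ENNReal.ofReal (Wex a) + ENNReal.ofReal (Uex c a)) := by
    intro A hA
    have h0 : nuMeas s A = ∫⁻ _ in A, 1 ∂(nuMeas s) := (setLIntegral_one A).symm
    rw [h0]
    have h1 : ∫⁻ _ in A, (1:ENNReal) ∂(nuMeas s)
        ≤ ∫⁻ x in A, (ENNReal.ofReal (fc s c' x) + (1 - ENNReal.ofReal (fc s c' x))) ∂(nuMeas s) :=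
      lintegral_mono fun x => le_add_tsub
    have h2 : ∫⁻ x in A, (ENNReal.ofReal (fc s c' x) + (1 - ENNReal.ofReal (fc s c' x))) ∂(nuMeas s)
        = (∫⁻ x in A, ENNReal.ofReal (fc s c' x) ∂(nuMeas s))
          + ∫⁻ x in A, (1 - ENNReal.ofReal (fc s c' x)) ∂(nuMeas s) :=
      lintegral_add_left hfm _
    have h3 : ∫⁻ x in A, ENNReal.ofReal (fc s c' x) ∂(nuMeas s) ≤ etaMeas s c' A := by
      rw [hη_eq, Measure.add_apply, withDensity_apply _ hA]
      exact le_add_right le_rfl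
    have h4 : ∫⁻ x in A, (1 - ENNReal.ofReal (fc s c' x)) ∂(nuMeas s)
        ≤ ENNReal.ofReal (Wex a) + ENNReal.ofReal (Uex c a) := by
      calc ∫⁻ x in A, (1 - ENNReal.ofReal (fc s c' x)) ∂(nuMeas s)
          ≤ ∫⁻ x, (1 - ENNReal.ofReal (fc s c' x)) ∂(nuMeas s) :=
            setLIntegral_le_lintegral _ _
      _ = (∫⁻ x, (1 - ENNReal.ofReal (fc s c' x)) ∂(volume.withDensity g))
            + k * (1 - ENNReal.ofReal (fc s c' p)) := by
            rw [hν_eq, lintegral_add_measure, lintegral_smul_measure,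
              lintegral_dirac p, smul_eq_mul]
      _ ≤ (∫⁻ _, (1:ENNReal) ∂(volume.withDensity g))
            + 1 * (1 - ENNReal.ofReal (fc s c' p)) := by
            exact add_le_add (lintegral_mono fun x => tsub_le_self)
              (mul_le_mul_left hk1 _)
      _ = volume.withDensity g Set.univ + (1 - ENNReal.ofReal (fc s c' p)) := by
            rw [lintegral_one, one_mul]
      _ ≤ ENNReal.ofReal (Wex a) + ENNReal.ofReal (Uex c a) := by
            apply add_le_add hμ1
            have hsub := ENNReal.ofReal_sub 1 (hfc_nonneg p hp_le)
            rw [hfcp] at hsub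
            rw [hsub, ENNReal.ofReal_one]
    rw [h2] at h1
    exact le_trans h1 (add_le_add h3 h4)
  have hν_y : nuMeas s {y} = 0 := by
    rw [hν_eq, Measure.add_apply, Measure.smul_apply, smul_eq_mul]
    have h1 : volume.withDensity g {y} = 0 := by
      rw [withDensity_apply _ (measurableSet_singleton y)]
      exact setLIntegral_measure_zero _ _ Real.volume_singleton
    have h2 : Measure.dirac p {y} = 0 := by
      rw [Measure.dirac_apply' _ (measurableSet_singleton y)]
      apply Set.indicator_of_notMem
      simp only [Set.mem_singleton_iff]
      intro h; rw [h] at hp_neg; linarith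
    rw [h1, h2, mul_zero, add_zero]
  have hη_y : etaMeas s c' {y} = ENNReal.ofReal (Mex c a) := by
    rw [hη_eq, Measure.add_apply, Measure.smul_apply, smul_eq_mul,
      withDensity_apply _ (measurableSet_singleton y),
      setLIntegral_measure_zero _ _ hν_y,
      Measure.dirac_apply' _ (measurableSet_singleton y),
      Set.indicator_of_mem (Set.mem_singleton y), Pi.one_apply, mul_one, zero_add]
  set B := max (Mex c a) (Uex c a + Wex a) with hB
  have hpt : ∀ A : {A : Set ℝ // MeasurableSet A},
      |(etaMeas s c' A.1).toReal - (nuMeas s A.1).toReal| ≤ B := by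
    rintro ⟨A, hA⟩
    have hνA : nuMeas s A ≠ ⊤ :=
      (lt_of_le_of_lt (measure_mono (Set.subset_univ A)) hνfin).ne
    have hηle := heta_le A hA
    have hηA : etaMeas s c' A ≠ ⊤ :=
      (lt_of_le_of_lt hηle
        (ENNReal.add_lt_top.2 ⟨lt_top_iff_ne_top.2 hνA, ENNReal.ofReal_lt_top⟩)).ne
    rw [abs_sub_le_iff]
    constructor
    · have h1 := ENNReal.toReal_mono
        (ENNReal.add_ne_top.2 ⟨hνA, ENNReal.ofReal_ne_top⟩) hηle
      rw [ENNReal.toReal_add hνA ENNReal.ofReal_ne_top, ENNReal.toReal_ofReal hM0] at h1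
      have h2 : Mex c a ≤ B := le_max_left _ _
      linarith
    · have hνle := hnu_le A hA
      have h1 := ENNReal.toReal_mono
        (ENNReal.add_ne_top.2 ⟨hηA,
          ENNReal.add_ne_top.2 ⟨ENNReal.ofReal_ne_top, ENNReal.ofReal_ne_top⟩⟩) hνle
      rw [ENNReal.toReal_add hηA
          (ENNReal.add_ne_top.2 ⟨ENNReal.ofReal_ne_top, ENNReal.ofReal_ne_top⟩),
        ENNReal.toReal_add ENNReal.ofReal_ne_top ENNReal.ofReal_ne_top,
        ENNReal.toReal_ofReal hW0, ENNReal.toReal_ofReal hU0] at h1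
      have h2 : Uex c a + Wex a ≤ B := le_max_right _ _
      linarith
  have hbdd : BddAbove (Set.range fun A : {A : Set ℝ // MeasurableSet A} =>
      |(etaMeas s c' A.1).toReal - (nuMeas s A.1).toReal|) := by
    refine ⟨B, ?_⟩
    rintro x ⟨A, rfl⟩
    exact hpt A
  constructor
  · have h1 := le_ciSup hbdd (⟨{y}, measurableSet_singleton y⟩ : {A : Set ℝ // MeasurableSet A})
    rw [dTV]
    simp only [hη_y, hν_y] at h1
    rw [ENNReal.toReal_zero, sub_zero, ENNReal.toReal_ofReal hM0, abs_of_nonneg hM0] at h1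
    exact h1
  · rw [dTV]
    exact ciSup_le hpt

set_option maxHeartbeats 1000000 in
theorem stmt16 (c : ℝ) (hc : c < 0) :
    Filter.Tendsto
      (fun s : ℕ => dTV (etaMeas s (c - Real.log (Real.sqrt s))) (nuMeas s))
      Filter.atTop (nhds (Real.exp (-c) / (1 + Real.exp (-c)))) := by
  have hsq := sqrt_tendsto_atTop
  have hexpc : 1 < Real.exp (-c) := by
    calc (1:ℝ) = Real.exp 0 := Real.exp_zero.symm
    _ < Real.exp (-c) := Real.exp_lt_exp.2 (by linarith)
  have hev : ∀ᶠ s : ℕ in atTop,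
      2 ≤ Real.sqrt s ∧ Real.sqrt s + 2 ≤ Real.exp (-c) * Real.sqrt s := by
    filter_upwards [hsq.eventually_ge_atTop 2,
      hsq.eventually_ge_atTop (2 / (Real.exp (-c) - 1))] with s h1 h2
    refine ⟨h1, ?_⟩
    have h3 : 2 ≤ Real.sqrt s * (Real.exp (-c) - 1) :=
      (div_le_iff₀ (by linarith)).1 h2
    nlinarith
  have hinva : Tendsto (fun a : ℝ => (a ^ 2)⁻¹) atTop (nhds 0) :=
    (tendsto_pow_atTop two_ne_zero).inv_tendsto_atTop
  have hMa : Tendsto (fun a : ℝ => Mex c a) atTop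
      (nhds (Real.exp (-c) / (1 + Real.exp (-c)))) := by
    have h1 : Tendsto (fun a : ℝ =>
        (Real.exp (-c) - Real.exp c * (a ^ 2)⁻¹) / (Real.exp (-c) + 1)) atTop
        (nhds ((Real.exp (-c) - Real.exp c * 0) / (Real.exp (-c) + 1))) :=
      (tendsto_const_nhds.sub (hinva.const_mul _)).div_const _
    have h2 : (Real.exp (-c) - Real.exp c * 0) / (Real.exp (-c) + 1)
        = Real.exp (-c) / (1 + Real.exp (-c)) := by rw [mul_zero, sub_zero, add_comm]
    rw [h2] at h1
    apply h1.congr'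
    filter_upwards [eventually_ge_atTop 1] with a ha1
    have ha0 : (0:ℝ) < a := by linarith
    rw [Mex]
    have hden : Real.exp (-c) * a + a > 0 := by positivity
    have hden2 : Real.exp (-c) + 1 > 0 := by positivity
    field_simp
  have hM : Tendsto (fun s : ℕ => Mex c (Real.sqrt s)) atTop
      (nhds (Real.exp (-c) / (1 + Real.exp (-c)))) := hMa.comp hsq
  have hUa : Tendsto (fun a : ℝ => Uex c a) atTop
      (nhds (Real.exp (-c) / (1 + Real.exp (-c)))) := by
    have hnum : Tendsto (fun a : ℝ => Real.exp (-c) + (a ^ 2)⁻¹) atTop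
        (nhds (Real.exp (-c) + 0)) := tendsto_const_nhds.add hinva
    have hden : Tendsto (fun a : ℝ =>
        Real.exp c * (a ^ 2)⁻¹ + 1 + Real.exp (-c) + (a ^ 2)⁻¹) atTop
        (nhds (Real.exp c * 0 + 1 + Real.exp (-c) + 0)) :=
      (((hinva.const_mul _).add tendsto_const_nhds).add tendsto_const_nhds).add hinva
    have hne : Real.exp c * 0 + 1 + Real.exp (-c) + 0 ≠ 0 := by
      have := Real.exp_pos (-c); intro h; nlinarith
    have h1 := hnum.div hden hne
    have h2 : (Real.exp (-c) + 0) / (Real.exp c * 0 + 1 + Real.exp (-c) + 0)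
        = Real.exp (-c) / (1 + Real.exp (-c)) := by rw [mul_zero, add_zero, add_zero, zero_add]
    rw [h2] at h1
    apply h1.congr'
    filter_upwards [eventually_ge_atTop 1] with a ha1
    have ha0 : (0:ℝ) < a := by linarith
    simp only [Pi.div_apply]
    rw [Uex]
    have hd1 : (0:ℝ) < Real.exp c / a + a + Real.exp (-c) * a + 1 / a := by positivity
    rw [div_eq_div_iff (by positivity) hd1.ne']
    field_simp
  have hU : Tendsto (fun s : ℕ => Uex c (Real.sqrt s)) atTop
      (nhds (Real.exp (-c) / (1 + Real.exp (-c)))) := hUa.comp hsq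
  have hWa : Tendsto (fun a : ℝ => Wex a) atTop (nhds 0) := by
    have h1 : Tendsto (fun a : ℝ => Real.pi * (a + -1) ^ 2) atTop atTop :=
      Tendsto.const_mul_atTop Real.pi_pos
        ((tendsto_pow_atTop two_ne_zero).comp (tendsto_atTop_add_const_right _ (-1) tendsto_id))
    have h2 := (h1.inv_tendsto_atTop).const_mul (4:ℝ)
    rw [mul_zero] at h2
    apply h2.congr
    intro x
    simp only [Pi.inv_apply]
    rw [Wex, sub_eq_add_neg]
  have hW : Tendsto (fun s : ℕ => Wex (Real.sqrt s)) atTop (nhds 0) := hWa.comp hsq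
  have hupper : Tendsto (fun s : ℕ =>
      max (Mex c (Real.sqrt s)) (Uex c (Real.sqrt s) + Wex (Real.sqrt s))) atTop
      (nhds (Real.exp (-c) / (1 + Real.exp (-c)))) := by
    have hmx := hM.max (hU.add hW)
    rw [add_zero, max_self] at hmx
    exact hmx
  refine tendsto_of_tendsto_of_tendsto_of_le_of_le' hM hupper ?_ ?_
  · filter_upwards [hev] with s hs
    exact (dTV_bounds c hc s hs.1 hs.2).1
  · filter_upwards [hev] with s hs
    exact (dTV_bounds c hc s hs.1 hs.2).2
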